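/- Let A be a complex unital Banach algebra, a, b ∈ A, and suppose that for all x ∈ A and λ ∈ ℂ with |λ| > ρ(x), λ ∈ σ(x + a) if and only if λ ∈ σ(x + b). Then for every quasinilpotent q ∈ A and every n ∈ ℕ, max{ρ(n(b−a)+q), ρ(nb−(n−1)a+q)} ≤ ‖b‖ + ‖q‖. -/

import Mathlib

open scoped ENNReal NNReal

section Aux

variable {A : Type*} [NormedRing A] [NormedAlgebra ℂ A] [CompleteSpace A]

private lemma aux_nnnorm_le_sr {x : A} {lam : ℂ} (hlam : lam ∈ spectrum ℂ x) :
    (‖lam‖₊ : ℝ≥0∞) ≤ spectralRadius ℂ x :=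
  le_iSup₂ (α := ℝ≥0∞) lam hlam

private lemma aux_sr_le_nnnorm (x : A) : spectralRadius ℂ x ≤ (‖x‖₊ : ℝ≥0∞) := by
  refine (spectrum.spectralRadius_le_liminf_pow_nnnorm_pow_one_div ℂ x).trans ?_
  refine Filter.liminf_le_of_frequently_le' ?_
  refine (Filter.eventually_atTop.2 ⟨1, fun n hn => ?_⟩).frequently
  have hn' : 0 < n := hn
  have h1 : (‖x ^ n‖₊ : ℝ≥0∞) ≤ (‖x‖₊ : ℝ≥0∞) ^ (n : ℕ) := by
    exact_mod_cast nnnorm_pow_le' x hn'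
  calc (‖x ^ n‖₊ : ℝ≥0∞) ^ (1 / (n : ℝ))
      ≤ ((‖x‖₊ : ℝ≥0∞) ^ (n : ℕ)) ^ (1 / (n : ℝ)) :=
        ENNReal.rpow_le_rpow h1 (by positivity)
    _ = (‖x‖₊ : ℝ≥0∞) := by
        rw [← ENNReal.rpow_natCast, ← ENNReal.rpow_mul,
          mul_one_div_cancel (by exact_mod_cast hn'.ne' : (n : ℝ) ≠ 0), ENNReal.rpow_one]

private lemma aux_mem_neg {x : A} {lam : ℂ} :
    lam ∈ spectrum ℂ (-x) ↔ -lam ∈ spectrum ℂ x := by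
  rw [← spectrum.neg_eq, Set.mem_neg]

private lemma aux_sr_neg (x : A) : spectralRadius ℂ (-x) = spectralRadius ℂ x := by
  refine le_antisymm (iSup₂_le fun lam hlam => ?_) (iSup₂_le fun lam hlam => ?_)
  · have h1 : -lam ∈ spectrum ℂ x := aux_mem_neg.mp hlam
    simpa using aux_nnnorm_le_sr h1
  · have h1 : -lam ∈ spectrum ℂ (-x) := aux_mem_neg.mpr (by simpa using hlam)
    simpa using aux_nnnorm_le_sr h1

private lemma trans_addb {a b : A}
    (h : ∀ (x : A) (lam : ℂ), spectralRadius ℂ x < (‖lam‖₊ : ℝ≥0∞) →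
      (lam ∈ spectrum ℂ (x + a) ↔ lam ∈ spectrum ℂ (x + b)))
    {x : A} {M : ℝ≥0∞} (hx : spectralRadius ℂ x ≤ M)
    (hA : spectralRadius ℂ (x + a) ≤ M) : spectralRadius ℂ (x + b) ≤ M := by
  refine iSup₂_le fun lam hlam => ?_
  rcases le_or_gt (‖lam‖₊ : ℝ≥0∞) M with hc | hc
  · exact hc
  exact le_trans (aux_nnnorm_le_sr ((h x lam (hx.trans_lt hc)).mpr hlam)) hA

private lemma trans_suba {a b : A}
    (h : ∀ (x : A) (lam : ℂ), spectralRadius ℂ x < (‖lam‖₊ : ℝ≥0∞) →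
      (lam ∈ spectrum ℂ (x + a) ↔ lam ∈ spectrum ℂ (x + b)))
    {x : A} {M : ℝ≥0∞} (hx : spectralRadius ℂ x ≤ M)
    (hB : spectralRadius ℂ (x - b) ≤ M) : spectralRadius ℂ (x - a) ≤ M := by
  refine iSup₂_le fun lam hlam => ?_
  rcases le_or_gt (‖lam‖₊ : ℝ≥0∞) M with hc | hc
  · exact hc
  have hx' : spectralRadius ℂ (-x) < (‖(-lam)‖₊ : ℝ≥0∞) := by
    rw [aux_sr_neg]; simpa using hx.trans_lt hc
  have e1 : -x + a = -(x - a) := by abel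
  have hmemA : -lam ∈ spectrum ℂ (-x + a) := by
    rw [e1]; exact aux_mem_neg.mpr (by simpa using hlam)
  have h2 := (h (-x) (-lam) hx').mp hmemA
  have e2 : -x + b = -(x - b) := by abel
  rw [e2] at h2
  have h3 : lam ∈ spectrum ℂ (x - b) := by simpa using aux_mem_neg.mp h2
  exact le_trans (aux_nnnorm_le_sr h3) hB

end Aux

theorem key_inductive_estimate {A : Type*} [NormedRing A] [NormedAlgebra ℂ A]
    [CompleteSpace A] (a b : A)
    (h : ∀ (x : A) (lam : ℂ), spectralRadius ℂ x < (‖lam‖₊ : ℝ≥0∞) →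
      (lam ∈ spectrum ℂ (x + a) ↔ lam ∈ spectrum ℂ (x + b))) :
    ∀ q : A, spectralRadius ℂ q = 0 → ∀ n : ℕ, 1 ≤ n →
      max (spectralRadius ℂ ((n : ℂ) • (b - a) + q))
          (spectralRadius ℂ ((n : ℂ) • b - ((n : ℂ) - 1) • a + q))
        ≤ (‖b‖₊ : ℝ≥0∞) + (‖q‖₊ : ℝ≥0∞) := by
  intro q hq
  set M : ℝ≥0∞ := (‖b‖₊ : ℝ≥0∞) + (‖q‖₊ : ℝ≥0∞) with hM
  have hbq : spectralRadius ℂ (b + q) ≤ M := by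
    refine (aux_sr_le_nnnorm _).trans ?_
    rw [hM]
    exact_mod_cast nnnorm_add_le b q
  suffices H : ∀ n : ℕ, 1 ≤ n →
      spectralRadius ℂ ((n : ℂ) • (b - a) + q) ≤ M ∧
      spectralRadius ℂ ((n : ℂ) • b - ((n : ℂ) - 1) • a + q) ≤ M by
    intro n hn
    exact max_le (H n hn).1 (H n hn).2
  intro n hn
  induction n, hn using Nat.le_induction with
  | base =>
    have hv : spectralRadius ℂ (((1 : ℕ) : ℂ) • b - (((1 : ℕ) : ℂ) - 1) • a + q) ≤ M := by
      have e : ((1 : ℕ) : ℂ) • b - (((1 : ℕ) : ℂ) - 1) • a + q = b + q := by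
        push_cast; module
      rw [e]; exact hbq
    refine ⟨?_, hv⟩
    have e : ((1 : ℕ) : ℂ) • (b - a) + q = (b + q) - a := by push_cast; module
    rw [e]
    refine trans_suba h hbq ?_
    have e2 : (b + q) - b = q := by abel
    rw [e2, hq]
    exact zero_le
  | succ n hn ih =>
    obtain ⟨hu, hv⟩ := ih
    have hv' : spectralRadius ℂ (((n + 1 : ℕ) : ℂ) • b - (((n + 1 : ℕ) : ℂ) - 1) • a + q)
        ≤ M := by
      have e : ((n + 1 : ℕ) : ℂ) • b - (((n + 1 : ℕ) : ℂ) - 1) • a + q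
          = ((n : ℂ) • (b - a) + q) + b := by push_cast; module
      rw [e]
      refine trans_addb h hu ?_
      have e2 : ((n : ℂ) • (b - a) + q) + a = (n : ℂ) • b - ((n : ℂ) - 1) • a + q := by
        module
      rw [e2]; exact hv
    refine ⟨?_, hv'⟩
    have e : ((n + 1 : ℕ) : ℂ) • (b - a) + q
        = (((n + 1 : ℕ) : ℂ) • b - (((n + 1 : ℕ) : ℂ) - 1) • a + q) - a := by
      push_cast; module
    rw [e]
    refine trans_suba h hv' ?_
    have e2 : (((n + 1 : ℕ) : ℂ) • b - (((n + 1 : ℕ) : ℂ) - 1) • a + q) - b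
        = (n : ℂ) • (b - a) + q := by push_cast; module
    rw [e2]; exact hu
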